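/- For any tree t on n vertices, D_max(t) ≥ n(n-1)/2; that is, every tree admits a linear arrangement whose sum of edge lengths is at least the sum 1 + 2 + ... + (n-1). -/

import Mathlib

open Finset

/-- The length of an edge under a linear arrangement `π` (positions `0,…,n-1`,
which gives the same lengths as positions `1,…,n`). -/
def edgeLen {n : ℕ} (π : Equiv.Perm (Fin n)) : Sym2 (Fin n) → ℕ :=
  Sym2.lift ⟨fun u v => ((π u : ℤ) - (π v : ℤ)).natAbs, fun u v => by dsimp only; omega⟩

/-- The sum of edge lengths of the graph `G` under the linear arrangement `π`. -/
def D {n : ℕ} (G : SimpleGraph (Fin n)) [DecidableRel G.Adj] (π : Equiv.Perm (Fin n)) : ℕ :=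
  ∑ e ∈ G.edgeFinset, edgeLen π e

/-- The maximum of `D` over all linear arrangements. -/
def Dmax {n : ℕ} (G : SimpleGraph (Fin n)) [DecidableRel G.Adj] : ℕ :=
  Finset.univ.sup (D G)

/-- The minimum of `D` over all linear arrangements. -/
def Dmin {n : ℕ} (G : SimpleGraph (Fin n)) [DecidableRel G.Adj] : ℕ :=
  Finset.univ.inf' ⟨Equiv.refl _, Finset.mem_univ _⟩ (D G)

/-- The path graph (linear tree) on `n` vertices. -/
def pathG (n : ℕ) : SimpleGraph (Fin n) where
  Adj u v := (u : ℕ) + 1 = v ∨ (v : ℕ) + 1 = u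
  symm.symm u v h := h.symm
  loopless.irrefl u h := by omega

instance (n : ℕ) : DecidableRel (pathG n).Adj :=
  fun u v => inferInstanceAs (Decidable (_ ∨ _))

/-- The star tree on `n` vertices, with hub at vertex `0`. -/
def starG (n : ℕ) : SimpleGraph (Fin n) where
  Adj u v := u ≠ v ∧ ((u : ℕ) = 0 ∨ (v : ℕ) = 0)
  symm.symm u v h := ⟨h.1.symm, h.2.symm⟩
  loopless.irrefl u h := h.1 rfl

instance (n : ℕ) : DecidableRel (starG n).Adj :=
  fun u v => inferInstanceAs (Decidable (_ ∧ _))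

/-- The bistar tree on `n` vertices with hub degrees `k1` and `n - k1`:
vertex `0` is a hub adjacent to vertex `1` and to the leaves `2,…,k1`;
vertex `1` is a hub adjacent to vertex `0` and to the leaves `k1+1,…,n-1`. -/
def bistarG (n k1 : ℕ) : SimpleGraph (Fin n) where
  Adj u v := u ≠ v ∧
    (((u : ℕ) = 0 ∧ ((v : ℕ) = 1 ∨ (2 ≤ (v : ℕ) ∧ (v : ℕ) ≤ k1))) ∨
     ((v : ℕ) = 0 ∧ ((u : ℕ) = 1 ∨ (2 ≤ (u : ℕ) ∧ (u : ℕ) ≤ k1))) ∨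
     ((u : ℕ) = 1 ∧ k1 < (v : ℕ)) ∨
     ((v : ℕ) = 1 ∧ k1 < (u : ℕ)))
  symm.symm u v h := ⟨h.1.symm, by tauto⟩
  loopless.irrefl u h := h.1 rfl

instance (n k1 : ℕ) : DecidableRel (bistarG n k1).Adj :=
  fun u v => inferInstanceAs (Decidable (_ ∧ _))

/-- The sum of the lengths of the edges incident to vertex `i` under arrangement `π`. -/
def Dinc {n : ℕ} (G : SimpleGraph (Fin n)) [DecidableRel G.Adj] (i : Fin n)
    (π : Equiv.Perm (Fin n)) : ℕ :=
  ∑ v ∈ G.neighborFinset i, ((π i : ℤ) - (π v : ℤ)).natAbs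

section Aux

open SimpleGraph

variable {n : ℕ}

/-- Dart-sum identity: summing `F` over dart-tails, grouped by vertex vs grouped by edge. -/
lemma dart_sum_eq (G : SimpleGraph (Fin n)) [DecidableRel G.Adj] (F : Fin n → ℤ) :
    ∑ v, (G.degree v : ℤ) * F v =
      ∑ e ∈ G.edgeFinset, Sym2.lift ⟨fun u v => F u + F v, fun u v => by ring⟩ e := by
  classical
  have h1 : ∑ d : G.Dart, F d.fst = ∑ v, (G.degree v : ℤ) * F v := by
    rw [← Finset.sum_fiberwise_of_maps_to (g := fun d : G.Dart => d.fst)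
        (fun d _ => Finset.mem_univ d.fst) (fun d => F d.fst)]
    refine Finset.sum_congr rfl fun v _ => ?_
    rw [Finset.sum_congr rfl (g := fun _ => F v) (fun d hd => by
        rw [Finset.mem_filter] at hd
        rw [hd.2]),
      Finset.sum_const, ← G.dart_fst_fiber_card_eq_degree v]
    · simp [mul_comm]
  have h2 : ∑ d : G.Dart, F d.fst =
      ∑ e ∈ G.edgeFinset, Sym2.lift ⟨fun u v => F u + F v, fun u v => by ring⟩ e := by
    rw [← Finset.sum_fiberwise_of_maps_to (g := fun d : G.Dart => d.edge)
        (fun d _ => (SimpleGraph.mem_edgeFinset).2 d.edge_mem) (fun d => F d.fst)]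
    refine Finset.sum_congr rfl fun e he => ?_
    rw [SimpleGraph.mem_edgeFinset] at he
    revert he
    refine Sym2.ind (fun u w => ?_) e
    intro he
    rw [SimpleGraph.mem_edgeSet] at he
    let d : G.Dart := ⟨(u, w), he⟩
    have hde : d.edge = s(u, w) := rfl
    have hfib : (Finset.univ.filter fun d' : G.Dart => d'.edge = s(u, w)) =
        ({d, d.symm} : Finset G.Dart) := by
      rw [← hde]
      simpa using d.edge_fiber
    rw [hfib, Finset.sum_pair d.symm_ne.symm]
    simp [d, SimpleGraph.Dart.symm]
  rw [← h1, h2]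

/-- Every tree admits a proper 2-coloring with a prescribed root colored `false`. -/
lemma tree_coloring {G : SimpleGraph (Fin n)} (hT : G.IsTree) (r : Fin n) :
    ∃ c : Fin n → Bool, c r = false ∧ ∀ ⦃u v⦄, G.Adj u v → c u ≠ c v := by
  classical
  choose f hf hu using hT.existsUnique_path r
  refine ⟨fun v => ((f v).length).bodd, ?_, ?_⟩
  · have h0 : (SimpleGraph.Walk.nil : G.Walk r r) = f r :=
      hu r SimpleGraph.Walk.nil SimpleGraph.Walk.IsPath.nil
    simp [← h0]
  · intro u v hadj hc
    replace hc : ((f u).length).bodd = ((f v).length).bodd := hc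
    by_cases hv : v ∈ (f u).support
    · have hq : (f u).takeUntil v hv = f v := hu v _ ((hf u).takeUntil hv)
      have hd : (f u).dropUntil v hv = SimpleGraph.Walk.cons hadj.symm SimpleGraph.Walk.nil := by
        have h1 : ((f u).dropUntil v hv).IsPath := (hf u).dropUntil hv
        have h2 : (SimpleGraph.Walk.cons hadj.symm SimpleGraph.Walk.nil : G.Walk v u).IsPath := by
          simp [SimpleGraph.Walk.cons_isPath_iff, hadj.ne']
        exact ((hT.existsUnique_path v u).unique h1 h2)
      have hlen : (f u).length = (f v).length + 1 := by
        conv_lhs => rw [← (f u).take_spec hv]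
        rw [SimpleGraph.Walk.length_append, hq, hd]
        simp
      rw [hlen] at hc
      simp at hc
    · have hp' : ((f u).concat hadj).IsPath := by
        rw [← SimpleGraph.Walk.isPath_reverse_iff, SimpleGraph.Walk.reverse_concat]
        rw [SimpleGraph.Walk.cons_isPath_iff]
        exact ⟨(SimpleGraph.Walk.isPath_reverse_iff _).2 (hf u),
          by simpa [SimpleGraph.Walk.support_reverse] using hv⟩
      have hfv : (f u).concat hadj = f v := hu v _ hp'
      have hlen : (f v).length = (f u).length + 1 := by
        rw [← hfv, SimpleGraph.Walk.length_concat]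
      rw [hlen] at hc
      simp at hc

end Aux

/-- Any tree on `n` vertices admits a linear arrangement whose sum of edge
lengths is at least `n(n-1)/2 = 1 + 2 + ⋯ + (n-1)`. -/
theorem Dmax_ge_star (n : ℕ) (G : SimpleGraph (Fin n)) [DecidableRel G.Adj]
    (hT : G.IsTree) : n * (n - 1) / 2 ≤ Dmax G := by
  classical
  rcases Nat.lt_or_ge n 2 with hn | hn
  · have h0 : n * (n - 1) / 2 = 0 := by
      interval_cases n <;> rfl
    rw [h0]
    exact Nat.zero_le _
  have hn1 : 1 ≤ n := by omega
  have hn0 : 0 < n := by omega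
  set r : Fin n := ⟨0, hn0⟩ with hrdef
  obtain ⟨c, hcr, hc⟩ := tree_coloring hT r
  -- every vertex has positive degree
  have hdeg : ∀ v : Fin n, 0 < G.degree v := by
    intro v
    rw [SimpleGraph.degree_pos_iff_exists_adj]
    have hne : ∃ w : Fin n, w ≠ v := by
      rcases eq_or_ne v ⟨0, hn0⟩ with h | h
      · exact ⟨⟨1, by omega⟩, by simp [h, Fin.ext_iff]⟩
      · exact ⟨⟨0, hn0⟩, fun hh => h (hh ▸ rfl)⟩
    obtain ⟨w, hw⟩ := hne
    obtain ⟨p⟩ := hT.isConnected.preconnected v w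
    cases p with
    | nil => exact absurd rfl hw.symm
    | cons h q => exact ⟨_, h⟩
  -- the arrangement
  set key : Fin n → ℤ :=
    fun v => if c v = true then (n : ℤ) + G.degree v else (n : ℤ) - G.degree v with hkey
  set σ : Equiv.Perm (Fin n) := Tuple.sort key with hσdef
  set π : Equiv.Perm (Fin n) := σ⁻¹ with hπdef
  have hσπ : ∀ v, σ (π v) = v := fun v => Equiv.apply_symm_apply σ v
  have hmono : ∀ u v : Fin n, π u ≤ π v → key u ≤ key v := by
    intro u v h
    have h2 : key (σ (π u)) ≤ key (σ (π v)) := Tuple.monotone_sort key h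
    simpa [Function.comp, hσπ] using h2
  have hdeg1 : ∀ v : Fin n, (1 : ℤ) ≤ (G.degree v : ℤ) := by
    intro v; exact_mod_cast hdeg v
  have hBA : ∀ u v : Fin n, c u = false → c v = true → π u < π v := by
    intro u v hu hv
    by_contra hcon
    push_neg at hcon
    have h2 := hmono v u hcon
    rw [hkey] at h2
    simp only [hv, hu, Bool.false_eq_true, if_true, if_false] at h2
    have h3 := hdeg1 u
    have h4 := hdeg1 v
    linarith
  set A : Finset (Fin n) := Finset.univ.filter (fun v => c v = true) with hA
  set B : Finset (Fin n) := Finset.univ.filter (fun v => ¬ (c v = true)) with hB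
  have hposlt : ∀ u v : Fin n, π u < π v → ((π u : ℕ) : ℤ) < ((π v : ℕ) : ℤ) := by
    intro u v h
    exact_mod_cast h
  have hcardAB : #A + #B = n := by
    rw [hA, hB, Finset.card_filter_add_card_filter_not]
    simp
  have hrB : r ∈ B := by simp [hB, hcr]
  have hb1 : 1 ≤ #B := Finset.card_pos.2 ⟨r, hrB⟩
  have ha1 : 1 ≤ #A := by
    obtain ⟨w, hw⟩ := (G.degree_pos_iff_exists_adj r).1 (hdeg r)
    have hcw : c w = true := by
      have h2 := hc hw
      rw [hcr] at h2
      cases hcww : c w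
      · rw [hcww] at h2; exact absurd rfl h2
      · rfl
    exact Finset.card_pos.2 ⟨w, by simp [hA, hcw]⟩
  have hblt : #B < n := by omega
  set bF : Fin n := ⟨#B, hblt⟩ with hbF
  -- positions of B vertices are below #B
  have hposB : ∀ v ∈ B, π v < bF := by
    intro v hv
    have hvf : c v = false := by
      have h2 := Finset.mem_filter.1 (hB ▸ hv)
      simpa using h2.2
    have hsub : Finset.Iic (π v) ⊆ B.image π := by
      intro x hx
      rw [Finset.mem_Iic] at hx
      cases hcw : c (π.symm x) with
      | false =>
        exact Finset.mem_image.2 ⟨π.symm x, by simp [hB, hcw], Equiv.apply_symm_apply π x⟩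
      | true =>
        have hlt := hBA v (π.symm x) hvf hcw
        rw [Equiv.apply_symm_apply] at hlt
        exact absurd hx (not_le.2 hlt)
    have hcard2 := Finset.card_le_card hsub
    rw [Fin.card_Iic, Finset.card_image_of_injective _ π.injective] at hcard2
    exact Fin.lt_def.2 (by omega : ((π v : Fin n) : ℕ) < #B)
  -- sums of positions
  have hSB2 : (∑ v ∈ B, ((π v : ℕ) : ℤ)) * 2 ≤ (#B : ℤ) * ((#B : ℤ) - 1) := by
    have h1 : ∑ x ∈ B.image π, ((x : ℕ) : ℤ) = ∑ v ∈ B, ((π v : ℕ) : ℤ) :=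
      Finset.sum_image (fun a _ b _ h => π.injective h)
    have h2 : ∑ x ∈ B.image π, ((x : ℕ) : ℤ) ≤ ∑ x ∈ Finset.Iio bF, ((x : ℕ) : ℤ) := by
      refine Finset.sum_le_sum_of_subset_of_nonneg ?_ (fun x _ _ => by positivity)
      intro x hx
      rw [Finset.mem_Iio]
      obtain ⟨v, hv, rfl⟩ := Finset.mem_image.1 hx
      exact hposB v hv
    have h3 : (∑ x ∈ Finset.Iio bF, ((x : ℕ) : ℤ)) * 2 = (#B : ℤ) * ((#B : ℤ) - 1) := by
      have h4 : ∑ x ∈ Finset.Iio bF, ((x : ℕ) : ℤ) = ∑ i ∈ Finset.Iio ((bF : ℕ)), (i : ℤ) := by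
        rw [← Fin.map_valEmbedding_Iio, Finset.sum_map]
        rfl
      have hbv : (bF : ℕ) = #B := rfl
      have h5 := Finset.sum_range_id_mul_two (#B)
      have h6 : ((∑ i ∈ Finset.range (#B), i : ℕ) : ℤ) * 2 = (((#B) * (#B - 1) : ℕ) : ℤ) := by
        exact_mod_cast h5
      rw [h4, hbv, Nat.Iio_eq_range, ← Nat.cast_sum, h6]
      push_cast [Nat.cast_sub hb1]
      ring
    calc (∑ v ∈ B, ((π v : ℕ) : ℤ)) * 2
        ≤ (∑ x ∈ Finset.Iio bF, ((x : ℕ) : ℤ)) * 2 := by rw [← h1]; linarith [h2]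
      _ = (#B : ℤ) * ((#B : ℤ) - 1) := h3
  have hT2 : (∑ v ∈ A, ((π v : ℕ) : ℤ) + ∑ v ∈ B, ((π v : ℕ) : ℤ)) * 2
      = (n : ℤ) * ((n : ℤ) - 1) := by
    have hsplit : ∑ v ∈ A, ((π v : ℕ) : ℤ) + ∑ v ∈ B, ((π v : ℕ) : ℤ)
        = ∑ v, ((π v : ℕ) : ℤ) := by
      rw [hA, hB]
      exact Finset.sum_filter_add_sum_filter_not _ _ _
    have h1 : ∑ v, ((π v : ℕ) : ℤ) = ∑ x : Fin n, ((x : ℕ) : ℤ) :=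
      Equiv.sum_comp π (fun x : Fin n => ((x : ℕ) : ℤ))
    have h2 : ∑ x : Fin n, ((x : ℕ) : ℤ) = ∑ i ∈ Finset.range n, (i : ℤ) :=
      Fin.sum_univ_eq_sum_range (fun i => (i : ℤ)) n
    have h5 := Finset.sum_range_id_mul_two n
    have h6 : ((∑ i ∈ Finset.range n, i : ℕ) : ℤ) * 2 = ((n * (n - 1) : ℕ) : ℤ) := by
      exact_mod_cast h5
    rw [hsplit, h1, h2, ← Nat.cast_sum, h6]
    push_cast [Nat.cast_sub hn1]
    ring
  -- degree sums
  have hedges : #G.edgeFinset = n - 1 := by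
    have h := hT.card_edgeFinset
    rw [Fintype.card_fin] at h
    omega
  have hdegsum : ∑ v : Fin n, (G.degree v : ℤ) = 2 * ((n : ℤ) - 1) := by
    have h := G.sum_degrees_eq_twice_card_edges
    rw [hedges] at h
    have h2 : ((∑ v : Fin n, G.degree v : ℕ) : ℤ) = ((2 * (n - 1) : ℕ) : ℤ) := by
      exact_mod_cast h
    push_cast [Nat.cast_sub hn1] at h2
    linarith [h2]
  have hdegA : ∑ v ∈ A, (G.degree v : ℤ) = (n : ℤ) - 1 := by
    have h := dart_sum_eq G (fun v => if c v = true then 1 else 0)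
    have hL : ∑ v, (G.degree v : ℤ) * (if c v = true then 1 else 0)
        = ∑ v ∈ A, (G.degree v : ℤ) := by
      rw [hA, Finset.sum_filter]
      refine Finset.sum_congr rfl fun v _ => ?_
      by_cases hcv : c v = true <;> simp [hcv]
    have hR : ∀ e ∈ G.edgeFinset,
        Sym2.lift ⟨fun u v => (if c u = true then (1:ℤ) else 0) + (if c v = true then 1 else 0),
          fun u v => by ring⟩ e = 1 := by
      intro e
      refine Sym2.ind (fun u w => ?_) e
      intro he
      rw [SimpleGraph.mem_edgeFinset, SimpleGraph.mem_edgeSet] at he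
      have hne := hc he
      cases hcu : c u <;> cases hcw : c w <;>
        rw [hcu, hcw] at hne <;> simp [hcu, hcw] at hne ⊢
    rw [hL] at h
    rw [h, Finset.sum_congr rfl hR, Finset.sum_const, hedges, nsmul_eq_mul, mul_one,
      Nat.cast_sub hn1]
    simp
  have hdegB : ∑ v ∈ B, (G.degree v : ℤ) = (n : ℤ) - 1 := by
    have hsplit : ∑ v ∈ A, (G.degree v : ℤ) + ∑ v ∈ B, (G.degree v : ℤ)
        = ∑ v, (G.degree v : ℤ) := by
      rw [hA, hB]
      exact Finset.sum_filter_add_sum_filter_not _ _ _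
    rw [hdegA, hdegsum] at hsplit
    linarith
  -- D π equals the signed sum
  have hDz : ((D G π : ℕ) : ℤ)
      = (∑ v ∈ A, (G.degree v : ℤ) * ((π v : ℕ) : ℤ))
        - ∑ v ∈ B, (G.degree v : ℤ) * ((π v : ℕ) : ℤ) := by
    have h := dart_sum_eq G (fun v => if c v = true then ((π v : ℕ) : ℤ) else -((π v : ℕ) : ℤ))
    have hL : ∑ v, (G.degree v : ℤ) * (if c v = true then ((π v : ℕ) : ℤ) else -((π v : ℕ) : ℤ))
        = (∑ v ∈ A, (G.degree v : ℤ) * ((π v : ℕ) : ℤ))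
          - ∑ v ∈ B, (G.degree v : ℤ) * ((π v : ℕ) : ℤ) := by
      have hpt : ∀ v : Fin n,
          (G.degree v : ℤ) * (if c v = true then ((π v : ℕ) : ℤ) else -((π v : ℕ) : ℤ))
          = (if c v = true then (G.degree v : ℤ) * ((π v : ℕ) : ℤ)
              else -((G.degree v : ℤ) * ((π v : ℕ) : ℤ))) := by
        intro v
        by_cases hcv : c v = true <;> simp [hcv] <;> ring
      rw [Finset.sum_congr rfl (fun v _ => hpt v), Finset.sum_ite, ← hA, ← hB]
      rw [Finset.sum_neg_distrib]
      ring
    have hR : ∀ e ∈ G.edgeFinset,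
        Sym2.lift ⟨fun u v => (if c u = true then ((π u : ℕ) : ℤ) else -((π u : ℕ) : ℤ))
          + (if c v = true then ((π v : ℕ) : ℤ) else -((π v : ℕ) : ℤ)),
          fun u v => by ring⟩ e
        = ((edgeLen π e : ℕ) : ℤ) := by
      intro e
      refine Sym2.ind (fun u w => ?_) e
      intro he
      rw [SimpleGraph.mem_edgeFinset, SimpleGraph.mem_edgeSet] at he
      have hne := hc he
      have hel : edgeLen π s(u, w) = ((π u : ℤ) - (π w : ℤ)).natAbs := rfl
      cases hcu : c u with
      | false =>
        have hcw : c w = true := by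
          cases hcww : c w
          · rw [hcu, hcww] at hne; exact absurd rfl hne
          · rfl
        have hlt := hBA u w hcu hcw
        have hle : ((π u : ℕ) : ℤ) ≤ ((π w : ℕ) : ℤ) := le_of_lt (hposlt u w hlt)
        rw [Sym2.lift_mk, hel]
        simp only [hcu, hcw, Bool.false_eq_true, if_false, if_true]
        omega
      | true =>
        have hcw : c w = false := by
          cases hcww : c w
          · rfl
          · rw [hcu, hcww] at hne; exact absurd rfl hne
        have hlt := hBA w u hcw hcu
        have hle : ((π w : ℕ) : ℤ) ≤ ((π u : ℕ) : ℤ) := le_of_lt (hposlt w u hlt)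
        rw [Sym2.lift_mk, hel]
        simp only [hcu, hcw, Bool.false_eq_true, if_false, if_true]
        omega
    rw [hL] at h
    rw [h, Finset.sum_congr rfl hR]
    simp only [D]
    exact Nat.cast_sum _ _
  -- Chebyshev
  have hMono : MonovaryOn (fun v => (G.degree v : ℤ)) (fun v => ((π v : ℕ) : ℤ))
      (A : Set (Fin n)) := by
    intro i hi j hj hlt
    have hlt' : ((π i : ℕ) : ℤ) < ((π j : ℕ) : ℤ) := hlt
    have h2 : (π i : ℕ) < (π j : ℕ) := by exact_mod_cast hlt'
    have hij : π i ≤ π j := le_of_lt h2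
    have h3 := hmono i j hij
    have hci : c i = true := by
      have := Finset.mem_coe.1 hi
      rw [hA] at this
      simpa using (Finset.mem_filter.1 this).2
    have hcj : c j = true := by
      have := Finset.mem_coe.1 hj
      rw [hA] at this
      simpa using (Finset.mem_filter.1 this).2
    rw [hkey] at h3
    simp only [hci, hcj, if_true] at h3
    simp only []
    linarith
  have hAnti : AntivaryOn (fun v => (G.degree v : ℤ)) (fun v => ((π v : ℕ) : ℤ))
      (B : Set (Fin n)) := by
    intro i hi j hj hlt
    have hlt' : ((π i : ℕ) : ℤ) < ((π j : ℕ) : ℤ) := hlt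
    have h2 : (π i : ℕ) < (π j : ℕ) := by exact_mod_cast hlt'
    have hij : π i ≤ π j := le_of_lt h2
    have h3 := hmono i j hij
    have hci : c i = false := by
      have := Finset.mem_coe.1 hi
      rw [hB] at this
      simpa using (Finset.mem_filter.1 this).2
    have hcj : c j = false := by
      have := Finset.mem_coe.1 hj
      rw [hB] at this
      simpa using (Finset.mem_filter.1 this).2
    rw [hkey] at h3
    simp only [hci, hcj, Bool.false_eq_true, if_false] at h3
    simp only []
    linarith
  have hch1 : ((n : ℤ) - 1) * (∑ v ∈ A, ((π v : ℕ) : ℤ))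
      ≤ (#A : ℤ) * ∑ v ∈ A, (G.degree v : ℤ) * ((π v : ℕ) : ℤ) := by
    have h := hMono.sum_smul_sum_le_card_smul_sum
    simp only [smul_eq_mul, nsmul_eq_mul] at h
    rw [hdegA] at h
    exact h
  have hch2 : (#B : ℤ) * ∑ v ∈ B, (G.degree v : ℤ) * ((π v : ℕ) : ℤ)
      ≤ ((n : ℤ) - 1) * (∑ v ∈ B, ((π v : ℕ) : ℤ)) := by
    have h := hAnti.card_smul_sum_le_sum_smul_sum
    simp only [smul_eq_mul, nsmul_eq_mul] at h
    rw [hdegB] at h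
    exact h
  -- final arithmetic
  set X : ℤ := ∑ v ∈ A, (G.degree v : ℤ) * ((π v : ℕ) : ℤ) with hXdef
  set Y : ℤ := ∑ v ∈ B, (G.degree v : ℤ) * ((π v : ℕ) : ℤ) with hYdef
  set SA : ℤ := ∑ v ∈ A, ((π v : ℕ) : ℤ) with hSAdef
  set SB : ℤ := ∑ v ∈ B, ((π v : ℕ) : ℤ) with hSBdef
  set m : ℤ := (n : ℤ) with hmdef
  set β : ℤ := (#B : ℤ) with hβdef
  have hab : (#A : ℤ) = m - β := by
    have h : ((#A + #B : ℕ) : ℤ) = m := by rw [hcardAB]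
    push_cast at h
    rw [hβdef]
    linarith
  have hβ1 : (1 : ℤ) ≤ β := by rw [hβdef]; exact_mod_cast hb1
  have hm2 : (2 : ℤ) ≤ m := by rw [hmdef]; exact_mod_cast hn
  have hα1 : (1 : ℤ) ≤ m - β := by
    rw [← hab]; exact_mod_cast ha1
  rw [hab] at hch1
  have hSAeq : 2 * SA = m * (m - 1) - SB * 2 := by linarith [hT2]
  have k1 : (2 * β) * ((m - 1) * SA) ≤ (2 * β) * ((m - β) * X) :=
    mul_le_mul_of_nonneg_left hch1 (by linarith)
  have k1' : β * (m - 1) * (m * (m - 1) - SB * 2) ≤ 2 * β * ((m - β) * X) := by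
    have h : β * (m - 1) * (m * (m - 1) - SB * 2) = β * (m - 1) * (2 * SA) := by
      rw [hSAeq]
    rw [h]
    linarith [k1]
  have k2 : (2 * (m - β)) * (β * Y) ≤ (2 * (m - β)) * ((m - 1) * SB) :=
    mul_le_mul_of_nonneg_left hch2 (by linarith)
  have k4 : (m * (m - 1)) * (SB * 2) ≤ (m * (m - 1)) * (β * (β - 1)) :=
    mul_le_mul_of_nonneg_left hSB2 (mul_nonneg (by linarith) (by linarith))
  have hmain : ((m - β) * β) * (m * (m - 1)) ≤ ((m - β) * β) * (2 * (X - Y)) := by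
    linarith [k1', k2, k4]
  have hposab : (0 : ℤ) < (m - β) * β := mul_pos (by linarith) (by linarith)
  have hfinZ : m * (m - 1) ≤ 2 * (X - Y) := le_of_mul_le_mul_left hmain hposab
  have hfinN : n * (n - 1) ≤ 2 * D G π := by
    have h1 : ((n * (n - 1) : ℕ) : ℤ) = m * (m - 1) := by
      rw [hmdef]
      push_cast [Nat.cast_sub hn1]
      ring
    have h2 : ((2 * D G π : ℕ) : ℤ) = 2 * (X - Y) := by
      push_cast [hDz]
      ring
    have h3 := hfinZ
    rw [← h1, ← h2] at h3
    exact_mod_cast h3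
  have hsup : D G π ≤ Dmax G := Finset.le_sup (Finset.mem_univ π)
  omega
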